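/- Let g = so_n(R) ⊆ h = so_n(R) ⋉ Rⁿ (n ≥ 3). In the Leibniz complex of h, the element λ = Σ_{σ ∈ Sh(2,n-2)} sgn(σ) α_{σ(1)σ(2)} ⊗ ε(e_{σ(3)} ∧ e_{σ(4)} ∧ ... ∧ e_{σ(n)}) ∈ h^{⊗(n-1)} is a cycle, i.e., d_Leibniz(λ) = 0, where ε : Λ^{n-2}(Rⁿ) → (Rⁿ)^{⊗(n-2)} ⊆ h^{⊗(n-2)} is the skew-symmetrization map and Sh(2,n-2) denotes the (2,n-2)-shuffles in Sₙ. -/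

import Mathlib

open scoped TensorProduct
open Matrix

/-- From `v : Fin (n+1) → L` and `i < j`, the family of `n` elements obtained by
replacing the `i`-th entry by `⁅v i, v j⁆` and deleting the `j`-th entry. -/
def bdel {L : Type*} [LieRing L]
    {n : ℕ} (v : Fin (n + 1) → L) (i j : Fin (n + 1)) (h : i < j) : Fin n → L :=
  Function.update (v ∘ j.succAbove)
    ⟨i.1, Nat.lt_of_lt_of_le h (Nat.lt_succ_iff.mp j.isLt)⟩ ⁅v i, v j⁆

/-- `α_{ij} = x_i ∂_j - x_j ∂_i ∈ so_n(ℝ)`. -/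
noncomputable def soA {n : ℕ} (i j : Fin n) : Matrix (Fin n) (Fin n) ℝ :=
  Matrix.single i j 1 - Matrix.single j i 1

theorem soA_transpose {n : ℕ} (a b : Fin n) : (soA a b)ᵀ = -(soA a b) := by
  ext i j
  simp [soA, Matrix.single, and_comm]

theorem soA_mulVec {n : ℕ} (a b s : Fin n) (ha : s ≠ a) (hb : s ≠ b) :
    (soA a b).mulVec (Pi.single s 1) = 0 := by
  ext i
  simp [soA, Matrix.single, hb.symm, ha.symm]

/-- for `g = so_n(ℝ) ⊆ h = so_n(ℝ) ⋉ ℝⁿ` (`n = m + 3 ≥ 3`, presented by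
`fg`, `fv` with the semidirect product bracket relations), the element
`λ = Σ_{σ ∈ Sh(2,n-2)} sgn(σ) α_{σ(1)σ(2)} ⊗ ε(e_{σ(3)} ∧ ... ∧ e_{σ(n)}) ∈ h^{⊗(n-1)}`
is a cycle in the Leibniz complex of `h`: `d_Leibniz(λ) = 0`.  Here `ε` is the
(normalized) skew-symmetrization map and `dL` is the Leibniz differential,
characterized on generators. -/
theorem so_n_lambda_is_cycle (m : ℕ)
    (H : Type*) [LieRing H] [LieAlgebra ℝ H]
    (fg : Matrix (Fin (m+3)) (Fin (m+3)) ℝ →ₗ[ℝ] H)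
    (fv : (Fin (m+3) → ℝ) →ₗ[ℝ] H)
    (hfg : ∀ X Y : Matrix (Fin (m+3)) (Fin (m+3)) ℝ,
      Xᵀ = -X → Yᵀ = -Y → fg ⁅X, Y⁆ = ⁅fg X, fg Y⁆)
    (hact : ∀ (X : Matrix (Fin (m+3)) (Fin (m+3)) ℝ) (v : Fin (m+3) → ℝ),
      Xᵀ = -X → ⁅fg X, fv v⁆ = fv (X.mulVec v))
    (habelian : ∀ v w : Fin (m+3) → ℝ, ⁅fv v, fv w⁆ = 0)
    (dL : (⨂[ℝ]^(m+2) H) →ₗ[ℝ] ⨂[ℝ]^(m+1) H)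
    (hdL : ∀ v : Fin (m+2) → H,
      dL (PiTensorProduct.tprod ℝ v) =
        ∑ i : Fin (m+2), ∑ j : Fin (m+2),
          if hij : i < j then
            ((-1 : ℝ) ^ ((j : ℕ) + 1)) • PiTensorProduct.tprod ℝ (bdel v i j hij)
          else 0) :
    dL (((Nat.factorial (m+1) : ℝ))⁻¹ •
      ∑ σ ∈ Finset.univ.filter (fun σ : Equiv.Perm (Fin (m+3)) =>
          σ 0 < σ 1 ∧ ∀ a b : Fin (m+3), 2 ≤ (a : ℕ) → a < b → σ a < σ b),
        ∑ τ : Equiv.Perm (Fin (m+1)),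
          ((Equiv.Perm.sign σ : ℤ) * (Equiv.Perm.sign τ : ℤ)) •
            PiTensorProduct.tprod ℝ
              (Fin.cons (fg (soA (σ 0) (σ 1)))
                (fun i : Fin (m+1) =>
                  fv (Pi.single (σ ((τ i).succ.succ)) 1)))) = 0 := by
  rw [_root_.map_smul, map_sum]
  rw [Finset.sum_eq_zero, smul_zero]
  intro σ hσ
  rw [map_sum]
  apply Finset.sum_eq_zero
  intro τ _
  rw [map_zsmul]
  set v : Fin (m+2) → H :=
    Fin.cons (fg (soA (σ 0) (σ 1)))
      (fun i : Fin (m+1) => fv (Pi.single (σ ((τ i).succ.succ)) 1)) with hv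
  have hz : ∀ (i j : Fin (m+2)), i < j → ⁅v i, v j⁆ = 0 := by
    intro i j hij
    induction i using Fin.cases with
    | succ k =>
      induction j using Fin.cases with
      | zero => exact absurd hij (Fin.not_lt_zero _)
      | succ l => simp [hv, Fin.cons_succ, habelian]
    | zero =>
      induction j using Fin.cases with
      | zero => exact absurd hij (lt_irrefl _)
      | succ l =>
        have hne0 : σ ((τ l).succ.succ) ≠ σ 0 := fun h =>
          Fin.succ_ne_zero _ (σ.injective h)
        have hne1 : σ ((τ l).succ.succ) ≠ σ 1 := by
          intro h
          have h2 : ((τ l).succ : Fin (m+2)).succ = (0 : Fin (m+2)).succ := by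
            rw [Fin.succ_zero_eq_one]; exact σ.injective h
          exact Fin.succ_ne_zero _ (Fin.succ_injective _ h2)
        have : ⁅v 0, v l.succ⁆ =
            fv ((soA (σ 0) (σ 1)).mulVec (Pi.single (σ ((τ l).succ.succ)) 1)) := by
          simp only [hv, Fin.cons_zero, Fin.cons_succ]
          exact hact _ _ (soA_transpose _ _)
        rw [this, soA_mulVec _ _ _ hne0 hne1, map_zero]
  rw [hdL v]
  rw [Finset.sum_eq_zero]
  · exact zsmul_zero _
  intro i _
  apply Finset.sum_eq_zero
  intro j _
  split
  · next hij =>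
    rw [show bdel v i j hij = Function.update (v ∘ j.succAbove)
        ⟨i.1, Nat.lt_of_lt_of_le hij (Nat.lt_succ_iff.mp j.isLt)⟩ ⁅v i, v j⁆ from rfl,
      hz i j hij]
    rw [(PiTensorProduct.tprod ℝ).map_update_zero, smul_zero]
  · rfl
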